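/- Let S be a compact left-topological semigroup, μ an idempotent regular Borel probability measure on S (μ*μ = μ under convolution), and suppose the support of μ is contained in the right stabilizer {q : μ*q = μ}. Then the support of μ is left simple as a subsemigroup, i.e., has a unique minimal left ideal equal to itself. -/

import Mathlib

open MeasureTheory

/-- A left ideal of the subsemigroup (carried by the set) `T`. -/
def IsLeftIdealIn {M : Type*} [Mul M] (T J : Set M) : Prop :=
  J.Nonempty ∧ J ⊆ T ∧ ∀ t ∈ T, ∀ j ∈ J, t * j ∈ J

/-- Let `S` be a compact left-topological semigroup, `μ` an idempotent
regular Borel probability measure on `S` (idempotent for convolution: for all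
continuous `f`, `μ(f) = ∫∫ f(p·q) dμ(p) dμ(q)`), and suppose the support of `μ` is
contained in the right stabilizer `{q : μ * δ_q = μ}`. Then the support of `μ` is
left simple as a subsemigroup: its unique minimal left ideal is itself (every left
ideal of it equals it). -/
theorem stmt12 {S : Type*} [Semigroup S] [TopologicalSpace S] [CompactSpace S] [T2Space S]
    [MeasurableSpace S] [BorelSpace S]
    (hc : ∀ a : S, Continuous fun x : S => x * a)
    (μ : Measure S) [IsProbabilityMeasure μ] [μ.Regular]
    (hidem : ∀ f : C(S, ℝ), ∫ x, f x ∂μ = ∫ p, ∫ q, f (p * q) ∂μ ∂μ)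
    (supp : Set S)
    (hsupp : supp = {x : S | ∀ U : Set S, IsOpen U → x ∈ U → 0 < μ U})
    (hstab : ∀ q ∈ supp, μ.map (fun p : S => p * q) = μ) :
    ∀ J : Set S, IsLeftIdealIn supp J → J = supp := by
  -- supp is closed
  have hclosed : IsClosed supp := by
    rw [hsupp, ← isOpen_compl_iff, isOpen_iff_forall_mem_open]
    intro x hx
    simp only [Set.mem_compl_iff, Set.mem_setOf_eq, not_forall] at hx
    obtain ⟨U, hU, hxU, hμU⟩ := hx
    refine ⟨U, fun y hy => ?_, hU, hxU⟩
    simp only [Set.mem_compl_iff, Set.mem_setOf_eq, not_forall]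
    exact ⟨U, hU, hy, hμU⟩
  -- the complement of supp is null
  have hnull : μ suppᶜ = 0 := by
    have hcpt : ∀ K : Set S, K ⊆ suppᶜ → IsCompact K → μ K = 0 := by
      intro K hKs hKc
      have hcov : ∀ x ∈ K, ∃ U : Set S, IsOpen U ∧ x ∈ U ∧ μ U = 0 := by
        intro x hx
        have hxs := hKs hx
        rw [hsupp] at hxs
        simp only [Set.mem_compl_iff, Set.mem_setOf_eq, not_forall] at hxs
        obtain ⟨U, hU, hxU, hμU⟩ := hxs
        exact ⟨U, hU, hxU, by simpa using hμU⟩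
      choose U hUopen hUmem hUnull using hcov
      obtain ⟨t, ht⟩ := hKc.elim_nhds_subcover' (fun x hx => U x hx)
        (fun x hx => (hUopen x hx).mem_nhds (hUmem x hx))
      refine le_antisymm ?_ (zero_le)
      calc μ K ≤ μ (⋃ x ∈ t, U x x.2) := measure_mono ht
        _ = 0 := by
          refine (measure_biUnion_null_iff t.countable_toSet).2 ?_
          intro x _; exact hUnull x x.2
    have hreg := (Measure.Regular.innerRegular (μ := μ)).measure_eq_iSup
      hclosed.isOpen_compl
    apply le_antisymm _ (zero_le)
    rw [hreg]
    refine iSup_le fun K => iSup_le fun hKs => iSup_le fun hKc => ?_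
    exact le_of_eq (hcpt K hKs hKc)
  -- for q ∈ supp, supp ⊆ (· * q) '' supp
  have himg : ∀ q ∈ supp, supp ⊆ (fun p : S => p * q) '' supp := by
    intro q hq s hs
    by_contra hsK
    set K := (fun p : S => p * q) '' supp with hKdef
    have hKc : IsCompact K :=
      (hclosed.isCompact).image (hc q)
    have hKcl : IsClosed K := hKc.isClosed
    have hUopen : IsOpen Kᶜ := hKcl.isOpen_compl
    have hsU : s ∈ Kᶜ := hsK
    have hpos : 0 < μ Kᶜ := by
      rw [hsupp] at hs
      exact hs Kᶜ hUopen hsU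
    have hmap : μ Kᶜ = μ ((fun p : S => p * q) ⁻¹' Kᶜ) := by
      conv_lhs => rw [← hstab q hq]
      exact Measure.map_apply (hc q).measurable hUopen.measurableSet
    have hsub : (fun p : S => p * q) ⁻¹' Kᶜ ⊆ suppᶜ := by
      intro p hp
      intro hps
      exact hp (⟨p, hps, rfl⟩ : p * q ∈ K)
    have : μ ((fun p : S => p * q) ⁻¹' Kᶜ) = 0 :=
      le_antisymm (hnull ▸ measure_mono hsub) (zero_le)
    rw [hmap, this] at hpos
    exact lt_irrefl 0 hpos
  -- conclude
  intro J ⟨⟨j, hj⟩, hJs, hJmul⟩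
  apply le_antisymm hJs
  intro s hs
  obtain ⟨p, hp, rfl⟩ := himg j (hJs hj) hs
  exact hJmul p hp j hj
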